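/- Let Ψ be a root datum with finite automorphism group Γ stabilizing a base Δ, and suppose β, β′ ∈ Φ are distinct roots with i*(β) = i*(β′). Then β′ − β is not a root of Φ, and ⟨β′, β^∨⟩ ≤ 0. -/

import Mathlib

open scoped BigOperators Classical

/-- A (not necessarily reduced) root datum `Ψ = (X*, Φ, X_*, Φ^∨)`:
dual lattices `X`, `Y` in perfect duality, a finite set of roots, and a
coroot map satisfying the usual axioms. -/
structure ZRootDatum (X Y : Type) [AddCommGroup X] [AddCommGroup Y] : Type where
  pair : X →+ Y →+ ℤ
  perfect : Function.Bijective fun x : X => pair x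
  perfect' : Function.Bijective fun y : Y => pair.flip y
  roots : Finset X
  coroot : X → Y
  pair_self : ∀ β ∈ roots, pair β (coroot β) = 2
  reflect_mem : ∀ β ∈ roots, ∀ x ∈ roots, x - pair x (coroot β) • β ∈ roots
  coreflect_mem : ∀ β ∈ roots, ∀ β' ∈ roots,
    ∃ β'' ∈ roots, coroot β' - pair β (coroot β') • coroot β = coroot β''

/-- The multiplicative group structure that `AddAut M` carried in older Mathlib
(composition as multiplication); current Mathlib makes `AddAut M` an additive group. -/
instance AddAut.instGroupOld {M : Type} [Add M] : Group (AddAut M) where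
  mul g h := AddEquiv.trans h g
  one := AddEquiv.refl _
  inv := AddEquiv.symm
  mul_assoc _ _ _ := rfl
  one_mul _ := rfl
  mul_one _ := rfl
  inv_mul_cancel := AddEquiv.self_trans_symm

variable {X Y Γ : Type} [AddCommGroup X] [AddCommGroup Y] [Group Γ]

/-- The Weyl group of a root datum: the subgroup of `Aut(X)` generated by the
reflections `w_β : x ↦ x - ⟨x, β^∨⟩β` through the roots. -/
def ZRootDatum.weylGroup (Ψ : ZRootDatum X Y) : Subgroup (AddAut X) :=
  Subgroup.closure {w : AddAut X | ∃ β ∈ Ψ.roots, ∀ x, w x = x - Ψ.pair x (Ψ.coroot β) • β}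

/-- `Δ` is a base (system of simple roots) of the root datum. -/
def ZRootDatum.IsBase (Ψ : ZRootDatum X Y) (Δ : Finset X) : Prop :=
  (↑Δ : Set X) ⊆ ↑Ψ.roots ∧
  LinearIndependent ℤ (fun a : ↥(↑Δ : Set X) => (a : X)) ∧
  ∀ β ∈ Ψ.roots, ∃ c : X → ℤ,
    β = ∑ a ∈ Δ, c a • a ∧ ((∀ a ∈ Δ, 0 ≤ c a) ∨ (∀ a ∈ Δ, c a ≤ 0))

/-- A group `Γ` acting (via `ρ` on `X*` and `ρ'` on `X_*`) by automorphisms of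
the root datum `Ψ`. -/
structure RDAction (Ψ : ZRootDatum X Y) (ρ : Γ →* AddAut X) (ρ' : Γ →* AddAut Y) : Prop where
  pair_eq : ∀ γ x y, Ψ.pair (ρ γ x) (ρ' γ y) = Ψ.pair x y
  root_mem : ∀ γ, ∀ β ∈ Ψ.roots, ρ γ β ∈ Ψ.roots
  coroot_eq : ∀ γ, ∀ β ∈ Ψ.roots, Ψ.coroot (ρ γ β) = ρ' γ (Ψ.coroot β)

/-- The norm map `N : x ↦ ∑_{γ ∈ Γ} γ·x`.  For a free lattice `X`, its kernel
is exactly the kernel of the projection of `X` onto the coinvariants `X_Γ`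
modulo torsion. -/
noncomputable def normMap [Fintype Γ] (ρ : Γ →* AddAut X) : X →+ X :=
  ∑ γ : Γ, ((ρ γ : X ≃+ X) : X →+ X)

/-- The projection `i* : X* → X̄*` onto the coinvariant lattice modulo torsion. -/
noncomputable def istar [Fintype Γ] (ρ : Γ →* AddAut X) : X →+ X ⧸ (normMap ρ).ker :=
  QuotientAddGroup.mk' (normMap ρ).ker

/-! ### Auxiliary lemmas -/

lemma ZRootDatum.zero_not_mem (Ψ : ZRootDatum X Y) : 0 ∉ Ψ.roots := by
  intro h
  have := Ψ.pair_self 0 h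
  simp at this

lemma normMap_apply [Fintype Γ] (ρ : Γ →* AddAut X) (x : X) :
    normMap ρ x = ∑ γ : Γ, ρ γ x := by
  simp [normMap, AddMonoidHom.finset_sum_apply]

lemma rho_inv_apply [Fintype Γ] (ρ : Γ →* AddAut X) (γ : Γ) (b : X) :
    ρ γ (ρ γ⁻¹ b) = b := by
  exact congrArg (fun g : AddAut X => g b) (show ρ γ * ρ γ⁻¹ = 1 by rw [← map_mul, mul_inv_cancel, map_one])

lemma rho_inv_apply' [Fintype Γ] (ρ : Γ →* AddAut X) (γ : Γ) (b : X) :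
    ρ γ⁻¹ (ρ γ b) = b := by
  exact congrArg (fun g : AddAut X => g b) (show ρ γ⁻¹ * ρ γ = 1 by rw [← map_mul, inv_mul_cancel, map_one])

lemma lin_indep_coeffs (Δ : Finset X)
    (hind : LinearIndependent ℤ (fun a : ↥(↑Δ : Set X) => (a : X)))
    (e : X → ℤ) (h : ∑ b ∈ Δ, e b • b = 0) : ∀ b ∈ Δ, e b = 0 := by
  have h2 : ∑ i ∈ Δ.attach, e (i : X) • ((i : X)) = 0 := by
    rwa [Finset.sum_attach Δ (fun b => e b • b)]
  have := linearIndependent_iff'.mp hind Δ.attach (fun i => e (i : X)) h2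
  intro b hb
  exact this ⟨b, hb⟩ (Finset.mem_attach _ _)

/-- Key lemma: if a `ℤ`-combination of the (Γ-stable, linearly independent) base `Δ`
lies in the kernel of the norm map, then the sum of its coefficients vanishes. -/
lemma ker_coeff_sum [Fintype Γ] (ρ : Γ →* AddAut X) (Δ : Finset X)
    (hind : LinearIndependent ℤ (fun a : ↥(↑Δ : Set X) => (a : X)))
    (hstab : ∀ γ : Γ, ∀ a ∈ Δ, ρ γ a ∈ Δ)
    (d : X → ℤ) (hd : normMap ρ (∑ a ∈ Δ, d a • a) = 0) :
    ∑ a ∈ Δ, d a = 0 := by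
  have key : ∀ γ : Γ, ρ γ (∑ a ∈ Δ, d a • a) = ∑ b ∈ Δ, d (ρ γ⁻¹ b) • b := by
    intro γ
    rw [map_sum]
    refine Finset.sum_nbij' (fun a => ρ γ a) (fun b => ρ γ⁻¹ b)
      (fun a ha => hstab γ a ha) (fun b hb => hstab γ⁻¹ b hb)
      (fun a _ => rho_inv_apply' ρ γ a) (fun b _ => rho_inv_apply ρ γ b) ?_
    intro a ha
    rw [map_zsmul, rho_inv_apply' ρ γ a]
  have expand : normMap ρ (∑ a ∈ Δ, d a • a) = ∑ b ∈ Δ, (∑ γ : Γ, d (ρ γ⁻¹ b)) • b := by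
    rw [normMap_apply, Finset.sum_congr rfl (fun γ _ => key γ), Finset.sum_comm]
    exact Finset.sum_congr rfl fun b _ => (Finset.sum_smul).symm
  rw [expand] at hd
  have he := lin_indep_coeffs Δ hind (fun b => ∑ γ : Γ, d (ρ γ⁻¹ b)) hd
  have hsum : ∑ b ∈ Δ, ∑ γ : Γ, d (ρ γ⁻¹ b) = 0 :=
    Finset.sum_eq_zero he
  rw [Finset.sum_comm] at hsum
  have hre : ∀ γ : Γ, ∑ b ∈ Δ, d (ρ γ⁻¹ b) = ∑ a ∈ Δ, d a := by
    intro γ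
    refine Finset.sum_nbij' (fun b => ρ γ⁻¹ b) (fun a => ρ γ a)
      (fun b hb => hstab γ⁻¹ b hb) (fun a ha => hstab γ a ha)
      (fun b _ => rho_inv_apply ρ γ b) (fun a _ => rho_inv_apply' ρ γ a)
      (fun b _ => rfl)
  rw [Finset.sum_congr rfl (fun γ _ => hre γ), Finset.sum_const, nsmul_eq_mul] at hsum
  have hcard : 0 < (Finset.univ : Finset Γ).card := Finset.card_pos.mpr ⟨1, Finset.mem_univ 1⟩
  rcases mul_eq_zero.mp hsum with h | h
  · exact absurd h (by positivity)
  · exact h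

/-! ### The integer coefficient sequence of iterated reflections -/

def coeffSeq (p q : ℤ) : ℕ → ℤ × ℤ
  | 0 => (0, 1)
  | k+1 => ((p*q-1)*(coeffSeq p q k).1 + p*(coeffSeq p q k).2,
            -q*(coeffSeq p q k).1 - (coeffSeq p q k).2)

lemma coeffSeq_rec (p q : ℤ) (k : ℕ) :
    (coeffSeq p q (k+2)).2 = (p*q-2) * (coeffSeq p q (k+1)).2 - (coeffSeq p q k).2 := by
  simp [coeffSeq]; ring

lemma coeffSeq_one_snd (p q : ℤ) : (coeffSeq p q 1).2 = -1 := by simp [coeffSeq]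

lemma coeffSeq_two_snd (p q : ℤ) : (coeffSeq p q 2).2 = 1 - p*q := by simp [coeffSeq]; ring

/-- case `q ≥ 2` : the second coefficient is strictly decreasing from index 1. -/
lemma bseq_dec (p q : ℤ) (hp : 2 ≤ p) (hq : 2 ≤ q) (k : ℕ) :
    (coeffSeq p q (k+1)).2 ≤ -1 ∧ (coeffSeq p q (k+2)).2 < (coeffSeq p q (k+1)).2 := by
  induction k with
  | zero =>
    rw [coeffSeq_one_snd, coeffSeq_two_snd]
    constructor
    · norm_num
    · nlinarith
  | succ n ih =>
    obtain ⟨h1, h2⟩ := ih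
    have h3 : (coeffSeq p q (n+2)).2 ≤ -1 := by omega
    refine ⟨h3, ?_⟩
    have hr : (coeffSeq p q (n+3)).2 = (p*q-2) * (coeffSeq p q (n+2)).2 - (coeffSeq p q (n+1)).2 :=
      coeffSeq_rec p q (n+1)
    show (coeffSeq p q (n+3)).2 < (coeffSeq p q (n+2)).2
    rw [hr]
    nlinarith [mul_nonneg (by nlinarith : (0:ℤ) ≤ p*q - 4)
      (by linarith : (0:ℤ) ≤ -(coeffSeq p q (n+2)).2)]

/-- case `q ≤ -1` : the signed second coefficient is strictly increasing from index 1. -/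
lemma useq_inc (p q : ℤ) (hp : 2 ≤ p) (hq : q ≤ -1) (k : ℕ) :
    1 ≤ (-1:ℤ)^(k+1) * (coeffSeq p q (k+1)).2 ∧
    (-1:ℤ)^(k+1) * (coeffSeq p q (k+1)).2 < (-1:ℤ)^(k+2) * (coeffSeq p q (k+2)).2 := by
  induction k with
  | zero =>
    rw [coeffSeq_one_snd, coeffSeq_two_snd]
    norm_num
    nlinarith
  | succ n ih =>
    obtain ⟨h1, h2⟩ := ih
    have h3 : 1 ≤ (-1:ℤ)^(n+2) * (coeffSeq p q (n+2)).2 := by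
      calc (1:ℤ) ≤ (-1:ℤ)^(n+1) * (coeffSeq p q (n+1)).2 := h1
      _ ≤ _ := le_of_lt h2
    refine ⟨h3, ?_⟩
    have hr : (coeffSeq p q (n+3)).2 = (p*q-2) * (coeffSeq p q (n+2)).2 - (coeffSeq p q (n+1)).2 :=
      coeffSeq_rec p q (n+1)
    show (-1:ℤ)^(n+2) * (coeffSeq p q (n+2)).2 < (-1:ℤ)^(n+3) * (coeffSeq p q (n+3)).2
    rw [hr]
    have hpow : (-1:ℤ)^(n+3) = -(-1:ℤ)^(n+2) := by ring
    have hpow2 : (-1:ℤ)^(n+1) = -(-1:ℤ)^(n+2) := by ring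
    rw [hpow]
    rw [hpow2] at h1 h2
    set s : ℤ := (-1:ℤ)^(n+2) with hs
    have hA : (0:ℤ) ≤ s * (coeffSeq p q (n+2)).2 := by linarith
    nlinarith [mul_le_mul_of_nonneg_right
      (show p*q - 1 ≤ -3 by nlinarith) hA, h1, h2, h3]

/-- case `q = 0` : explicit formula for the coefficients. -/
lemma coeffSeq_qzero (p : ℤ) (k : ℕ) :
    (coeffSeq p 0 k).1 = (-1:ℤ)^(k+1) * k * p ∧ (coeffSeq p 0 k).2 = (-1:ℤ)^k := by
  induction k with
  | zero => simp [coeffSeq]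
  | succ n ih =>
    obtain ⟨h1, h2⟩ := ih
    constructor
    · show (p*0-1)*(coeffSeq p 0 n).1 + p*(coeffSeq p 0 n).2 = _
      rw [h1, h2]
      push_cast
      ring
    · show -0*(coeffSeq p 0 n).1 - (coeffSeq p 0 n).2 = _
      rw [h2]
      ring

/-! ### The sequence of roots obtained by iterated reflections -/

def rootSeq (Ψ : ZRootDatum X Y) (β β' : X) : ℕ → X
  | 0 => β'
  | k+1 =>
    (rootSeq Ψ β β' k - Ψ.pair (rootSeq Ψ β β' k) (Ψ.coroot β') • β') -
      Ψ.pair (rootSeq Ψ β β' k - Ψ.pair (rootSeq Ψ β β' k) (Ψ.coroot β') • β') (Ψ.coroot β) • β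

lemma rootSeq_mem (Ψ : ZRootDatum X Y) {β β' : X} (hβ : β ∈ Ψ.roots) (hβ' : β' ∈ Ψ.roots)
    (k : ℕ) : rootSeq Ψ β β' k ∈ Ψ.roots := by
  induction k with
  | zero => exact hβ'
  | succ n ih => exact Ψ.reflect_mem β hβ _ (Ψ.reflect_mem β' hβ' _ ih)

lemma rootSeq_coords (Ψ : ZRootDatum X Y) {β β' : X} (hβ : β ∈ Ψ.roots) (hβ' : β' ∈ Ψ.roots)
    (k : ℕ) :
    rootSeq Ψ β β' k = (coeffSeq (Ψ.pair β' (Ψ.coroot β)) (Ψ.pair β (Ψ.coroot β')) k).1 • β +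
      (coeffSeq (Ψ.pair β' (Ψ.coroot β)) (Ψ.pair β (Ψ.coroot β')) k).2 • β' := by
  induction k with
  | zero => simp [rootSeq, coeffSeq]
  | succ n ih =>
    have hbb : Ψ.pair β (Ψ.coroot β) = 2 := Ψ.pair_self β hβ
    have hbb' : Ψ.pair β' (Ψ.coroot β') = 2 := Ψ.pair_self β' hβ'
    show (rootSeq Ψ β β' n - _ • β') - _ • β = _
    rw [ih]
    have hc1 : (coeffSeq (Ψ.pair β' (Ψ.coroot β)) (Ψ.pair β (Ψ.coroot β')) (n+1)).1 =
        (Ψ.pair β' (Ψ.coroot β) * Ψ.pair β (Ψ.coroot β') - 1) *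
          (coeffSeq (Ψ.pair β' (Ψ.coroot β)) (Ψ.pair β (Ψ.coroot β')) n).1 +
        Ψ.pair β' (Ψ.coroot β) * (coeffSeq (Ψ.pair β' (Ψ.coroot β)) (Ψ.pair β (Ψ.coroot β')) n).2 := rfl
    have hc2 : (coeffSeq (Ψ.pair β' (Ψ.coroot β)) (Ψ.pair β (Ψ.coroot β')) (n+1)).2 =
        -Ψ.pair β (Ψ.coroot β') * (coeffSeq (Ψ.pair β' (Ψ.coroot β)) (Ψ.pair β (Ψ.coroot β')) n).1 -
        (coeffSeq (Ψ.pair β' (Ψ.coroot β)) (Ψ.pair β (Ψ.coroot β')) n).2 := rfl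
    rw [hc1, hc2]
    simp only [map_sub, map_add, map_zsmul, AddMonoidHom.sub_apply, AddMonoidHom.add_apply,
      AddMonoidHom.smul_apply, smul_eq_mul, hbb, hbb']
    generalize (coeffSeq (Ψ.pair β' (Ψ.coroot β)) (Ψ.pair β (Ψ.coroot β')) n).1 = a
    generalize (coeffSeq (Ψ.pair β' (Ψ.coroot β)) (Ψ.pair β (Ψ.coroot β')) n).2 = b
    generalize Ψ.pair β' (Ψ.coroot β) = p
    generalize Ψ.pair β (Ψ.coroot β') = q
    module

/-- Let `Ψ` be a root datum with finite automorphism group `Γ`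
stabilizing a base `Δ`, and suppose `β, β' ∈ Φ` are distinct roots with
`i*(β) = i*(β')`.  Then `β' - β` is not a root of `Φ`, and `⟨β', β^∨⟩ ≤ 0`. -/
theorem sub_not_root_and_pairing_nonpos
    [Fintype Γ] [Module.Free ℤ X] [Module.Finite ℤ X]
    (Ψ : ZRootDatum X Y) (ρ : Γ →* AddAut X) (ρ' : Γ →* AddAut Y)
    (hact : RDAction Ψ ρ ρ') (Δ : Finset X) (hΔ : Ψ.IsBase Δ)
    (hstab : ∀ γ : Γ, ∀ a ∈ Δ, ρ γ a ∈ Δ)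
    (β β' : X) (hβ : β ∈ Ψ.roots) (hβ' : β' ∈ Ψ.roots)
    (hne : β ≠ β') (heq : istar ρ β = istar ρ β') :
    β' - β ∉ Ψ.roots ∧ Ψ.pair β' (Ψ.coroot β) ≤ 0 := by
  obtain ⟨hsub, hind, hdecomp⟩ := hΔ
  have hnzsd : Module.IsTorsionFree ℤ X := inferInstance
  -- no root lies in the kernel of the norm map
  have hroot_ne : ∀ w ∈ Ψ.roots, normMap ρ w ≠ 0 := by
    intro w hw hn
    obtain ⟨c, hc, hsign⟩ := hdecomp w hw
    have hsum : ∑ a ∈ Δ, c a = 0 :=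
      ker_coeff_sum ρ Δ hind hstab c (by rw [← hc]; exact hn)
    have hzero : ∀ a ∈ Δ, c a = 0 := by
      rcases hsign with hs | hs
      · exact fun a ha => (Finset.sum_eq_zero_iff_of_nonneg hs).mp hsum a ha
      · exact fun a ha => (Finset.sum_eq_zero_iff_of_nonpos hs).mp hsum a ha
    have hw0 : w = 0 := by
      rw [hc]
      exact Finset.sum_eq_zero fun a ha => by rw [hzero a ha, zero_smul]
    exact Ψ.zero_not_mem (hw0 ▸ hw)
  -- the difference lies in the kernel of the norm map
  have hN : normMap ρ (β' - β) = 0 := by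
    obtain ⟨z, hz, hzeq⟩ := (QuotientAddGroup.mk'_eq_mk' _).mp heq
    have hz' : z = β' - β := by rw [← hzeq]; abel
    rw [← hz']
    exact AddMonoidHom.mem_ker.mp hz
  have part1 : β' - β ∉ Ψ.roots := fun hc => hroot_ne _ hc hN
  refine ⟨part1, ?_⟩
  -- part 2
  by_contra hcon
  push_neg at hcon
  set p := Ψ.pair β' (Ψ.coroot β) with hpdef
  set q := Ψ.pair β (Ψ.coroot β') with hqdef
  have hNsym : normMap ρ (β - β') = 0 := by
    have h : β - β' = -(β' - β) := by abel
    rw [h, map_neg, hN, neg_zero]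
  have hp1 : p ≠ 1 := by
    intro h
    have hm := Ψ.reflect_mem β hβ β' hβ'
    rw [← hpdef, h, one_smul] at hm
    exact part1 hm
  have hp2 : 2 ≤ p := by omega
  have hq1 : q ≠ 1 := by
    intro h
    have hm := Ψ.reflect_mem β' hβ' β hβ
    rw [← hqdef, h, one_smul] at hm
    exact hroot_ne _ hm hNsym
  have hβne0 : β ≠ 0 := fun h => Ψ.zero_not_mem (h ▸ hβ)
  have hβ'ne0 : β' ≠ 0 := fun h => Ψ.zero_not_mem (h ▸ hβ')
  -- β and β' are ℤ-linearly independent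
  have hindep : ∀ c d : ℤ, c • β' = d • β → c = 0 ∧ d = 0 := by
    intro c d hcd
    by_contra hc0
    have hcne : c ≠ 0 ∧ d ≠ 0 := by
      constructor
      · intro h
        rw [h, zero_smul] at hcd
        have : d = 0 := by
          rcases smul_eq_zero.mp hcd.symm with h' | h'
          · exact h'
          · exact absurd h' hβne0
        exact hc0 ⟨h, this⟩
      · intro h
        rw [h, zero_smul] at hcd
        have : c = 0 := by
          rcases smul_eq_zero.mp hcd with h' | h'
          · exact h'
          · exact absurd h' hβ'ne0
        exact hc0 ⟨this, h⟩
    obtain ⟨hc, hd⟩ := hcne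
    have e1 : c * p = d * 2 := by
      have := congrArg (fun x => Ψ.pair x (Ψ.coroot β)) hcd
      simpa [map_zsmul, AddMonoidHom.smul_apply, smul_eq_mul, Ψ.pair_self β hβ, ← hpdef]
        using this
    have e2 : c * 2 = d * q := by
      have := congrArg (fun x => Ψ.pair x (Ψ.coroot β')) hcd
      simpa [map_zsmul, AddMonoidHom.smul_apply, smul_eq_mul, Ψ.pair_self β' hβ', ← hqdef]
        using this
    have hpq4 : c * d * (p * q - 4) = 0 := by linear_combination (d*q) * e1 - (2*d) * e2
    have hpq : p * q = 4 := by
      rcases mul_eq_zero.mp hpq4 with h | h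
      · rcases mul_eq_zero.mp h with h' | h'
        · exact absurd h' hc
        · exact absurd h' hd
      · omega
    have hqpos : 1 ≤ q := by nlinarith
    have hq2 : 2 ≤ q := by omega
    have hq2' : q = 2 := by
      nlinarith [mul_nonneg (by linarith : (0:ℤ) ≤ p - 2) (by linarith : (0:ℤ) ≤ q)]
    have hp2'' : p = 2 := by rw [hq2'] at hpq; omega
    have hcd' : c = d := by rw [hp2''] at e1; omega
    have hz : c • (β' - β) = 0 := by
      rw [smul_sub, hcd, hcd', sub_self]
    rcases smul_eq_zero.mp hz with h | h
    · exact hc h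
    · exact hne (sub_eq_zero.mp h).symm
  -- coordinates of equal roots in the sequence agree
  have hcoords : ∀ j k : ℕ, rootSeq Ψ β β' j = rootSeq Ψ β β' k →
      (coeffSeq p q j).1 = (coeffSeq p q k).1 ∧ (coeffSeq p q j).2 = (coeffSeq p q k).2 := by
    intro j k hjk
    rw [rootSeq_coords Ψ hβ hβ' j, rootSeq_coords Ψ hβ hβ' k, ← hpdef, ← hqdef] at hjk
    have key : ∀ u v w z : X, u + v = w + z → v - z = w - u := by
      intro u v w z h
      have h0 : (u + v) - (w + z) = 0 := by rw [h, sub_self]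
      have h1 : (v - z) - (w - u) = (u + v) - (w + z) := by abel
      exact sub_eq_zero.mp (h1.trans h0)
    have h2 : ((coeffSeq p q j).2 - (coeffSeq p q k).2) • β' =
        ((coeffSeq p q k).1 - (coeffSeq p q j).1) • β := by
      rw [sub_smul, sub_smul]
      exact key _ _ _ _ hjk
    obtain ⟨h3, h4⟩ := hindep _ _ h2
    constructor
    · have := sub_eq_zero.mp h4; omega
    · have := sub_eq_zero.mp h3; omega
  -- infinitely many terms of the root sequence coincide somewhere
  have hfin : ∀ f : ℕ → ℕ, ∃ j k : ℕ, j ≠ k ∧ rootSeq Ψ β β' (f j) = rootSeq Ψ β β' (f k) := by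
    intro f
    obtain ⟨j, k, hjk, he⟩ := Finite.exists_ne_map_eq_of_infinite
      (fun n : ℕ => (⟨rootSeq Ψ β β' (f n), rootSeq_mem Ψ hβ hβ' (f n)⟩ : {x // x ∈ Ψ.roots}))
    exact ⟨j, k, hjk, congrArg Subtype.val he⟩
  have hqcases : q ≤ -1 ∨ q = 0 ∨ 2 ≤ q := by omega
  rcases hqcases with hq | hq | hq
  · -- q ≤ -1
    obtain ⟨j, k, hjk, he⟩ := hfin (fun n => n + 1)
    have hc := (hcoords (j+1) (k+1) he).2
    have hmono : StrictMono (fun n : ℕ => (-1:ℤ)^(n+1) * (coeffSeq p q (n+1)).2) :=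
      strictMono_nat_of_lt_succ (fun n => (useq_inc p q hp2 hq n).2)
    have habs : ∀ n : ℕ, (-1:ℤ)^(n+1) * (coeffSeq p q (n+1)).2 = |(coeffSeq p q (n+1)).2| := by
      intro n
      have h1 := (useq_inc p q hp2 hq n).1
      have h2 : |(-1:ℤ)^(n+1) * (coeffSeq p q (n+1)).2| = |(coeffSeq p q (n+1)).2| := by
        rw [abs_mul, abs_pow, abs_neg, abs_one, one_pow, one_mul]
      rw [← h2, abs_of_pos (by linarith)]
    exact hjk (hmono.injective (show (-1:ℤ)^(j+1) * (coeffSeq p q (j+1)).2 =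
      (-1:ℤ)^(k+1) * (coeffSeq p q (k+1)).2 by rw [habs j, habs k, hc]))
  · -- q = 0
    obtain ⟨j, k, hjk, he⟩ := hfin id
    have hc := (hcoords j k he).1
    rw [hq] at hc
    rw [(coeffSeq_qzero p j).1, (coeffSeq_qzero p k).1] at hc
    have habs := congrArg (fun z : ℤ => |z|) hc
    simp only [abs_mul, abs_pow, abs_neg, abs_one, one_pow, one_mul] at habs
    have hpabs : |p| = p := abs_of_pos (by omega)
    rw [hpabs] at habs
    have hjabs : |(j:ℤ)| = (j:ℤ) := abs_of_nonneg (by positivity)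
    have hkabs : |(k:ℤ)| = (k:ℤ) := abs_of_nonneg (by positivity)
    rw [hjabs, hkabs] at habs
    have : (j:ℤ) = (k:ℤ) := by
      have hp0 : p ≠ 0 := by omega
      exact mul_right_cancel₀ hp0 habs
    exact hjk (by exact_mod_cast this)
  · -- 2 ≤ q
    obtain ⟨j, k, hjk, he⟩ := hfin (fun n => n + 1)
    have hc := (hcoords (j+1) (k+1) he).2
    have hanti : StrictAnti (fun n : ℕ => (coeffSeq p q (n+1)).2) :=
      strictAnti_nat_of_succ_lt (fun n => (bseq_dec p q hp2 hq n).2)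
    exact hjk (hanti.injective hc)
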